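/- Assuming countable choice: a function F : ℕ^ℕ → ℕ is realisable (realised by some Brouwer-operation) if and only if there exists a Brouwer-operation γ ∈ K such that F is constant on the basic open set of every a ∈ bar(γ), i.e., for all a ∈ bar(γ) and all α, β extending a, F(α) = F(β). -/
import Mathlib


/-- Initial segment of `α` of length `n`. -/
def seg (α : ℕ → ℕ) (n : ℕ) : List ℕ := List.ofFn (fun i : Fin n => α i)

/-- `a` followed by the constant zero sequence. -/
def zext (a : List ℕ) : ℕ → ℕ := fun i => a.getD i 0

/-- Upward closure under extension. -/
def extU (U : Set (List ℕ)) : Set (List ℕ) := {a | ∃ b ∈ U, b <+: a}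

/-- The cover of formal Baire space, generated by η, ζ, ϝ. -/
inductive Cover : List ℕ → Set (List ℕ) → Prop
  | eta {a : List ℕ} {U : Set (List ℕ)} : a ∈ U → Cover a U
  | zeta {a : List ℕ} {U : Set (List ℕ)} (k : ℕ) : Cover a U → Cover (a ++ [k]) U
  | digamma {a : List ℕ} {U : Set (List ℕ)} : (∀ n, Cover (a ++ [n]) U) → Cover a U

/-- A spread: a decidable tree where every node has a child. -/
def IsSpread (T : Set (List ℕ)) : Prop :=
  (∀ a, a ∈ T ∨ a ∉ T) ∧ (∀ a b : List ℕ, a <+: b → b ∈ T → a ∈ T) ∧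
  (∀ a ∈ T, ∃ n, a ++ [n] ∈ T)

/-- A fan: a finitely branching spread. -/
def IsFan (T : Set (List ℕ)) : Prop :=
  IsSpread T ∧ ∀ a ∈ T, ∃ N, ∀ n, a ++ [n] ∈ T → n ≤ N

/-- `α` is a path in the tree `T`. -/
def IsPath (T : Set (List ℕ)) (α : ℕ → ℕ) : Prop := ∀ n, seg α n ∈ T

/-- A c-bar: a c-set barring every sequence. -/
def IsCBar (P : Set (List ℕ)) : Prop :=
  (∃ δ : List ℕ → ℕ, ∀ a, a ∈ P ↔ ∀ b, δ a = δ (a ++ b)) ∧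
  (∀ α : ℕ → ℕ, ∃ n, seg α n ∈ P)

/-- Pointwise continuity for `F : ℕ^ℕ → ℕ`. -/
def PtwiseCts (F : (ℕ → ℕ) → ℕ) : Prop :=
  ∀ α : ℕ → ℕ, ∃ n, ∀ β : ℕ → ℕ, seg β n = seg α n → F β = F α

/-- An inductive subset of ℕ*. -/
def Inductive (Q : Set (List ℕ)) : Prop := ∀ a, (∀ n, a ++ [n] ∈ Q) → a ∈ Q

/-- Preimage of a subset of ℕ under a relation r ⊆ ℕ* × ℕ. -/
def rInv (r : List ℕ → ℕ → Prop) (D : Set ℕ) : Set (List ℕ) := {a | ∃ n ∈ D, r a n}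

/-- Formal topology map from formal Baire space to formal natural numbers. -/
def IsFTopMap (r : List ℕ → ℕ → Prop) : Prop :=
  Cover [] (rInv r Set.univ) ∧
  ∀ n m : ℕ, ∀ a ∈ extU (rInv r {n}) ∩ extU (rInv r {m}),
    Cover a (rInv r {l | l = n ∧ n = m})

/-- `F` is formally continuous: induced by a formal topology map on points. -/
def FormallyCts (F : (ℕ → ℕ) → ℕ) : Prop :=
  ∃ r : List ℕ → ℕ → Prop, IsFTopMap r ∧
    ∀ α : ℕ → ℕ, {n | ∃ k, r (seg α k) n} = {F α}

/-- The class of Brouwer-operations. -/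
inductive IsBrouwerOp : (List ℕ → ℕ) → Prop
  | const (n : ℕ) : IsBrouwerOp (fun _ => n + 1)
  | sup {γ : List ℕ → ℕ} : γ [] = 0 →
      (∀ n, IsBrouwerOp (fun a => γ (n :: a))) → IsBrouwerOp γ

/-- `bar γ`: minimal sequences on which `γ` is positive. -/
def barOf (γ : List ℕ → ℕ) : Set (List ℕ) :=
  {a | 0 < γ a ∧ ∀ b : List ℕ, b <+: a → b ≠ a → γ b = 0}

/-- The set presentation `Cov` of formal Baire space. -/
inductive Cov : List ℕ → Set (List ℕ) → Prop
  | single (a : List ℕ) : Cov a {a}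
  | union {a : List ℕ} {U : ℕ → Set (List ℕ)} :
      (∀ n, Cov (a ++ [n]) (U n)) → Cov a (⋃ n, U n)


lemma seg_succ (α : ℕ → ℕ) (n : ℕ) :
    seg α (n+1) = α 0 :: seg (fun i => α (i+1)) n := by
  simp [seg, List.ofFn_succ]

lemma seg_snoc (α : ℕ → ℕ) (n : ℕ) : seg α (n+1) = seg α n ++ [α n] := by
  rw [seg, seg, List.ofFn_succ']
  simp

lemma seg_prefix (α : ℕ → ℕ) {m n : ℕ} (h : m ≤ n) : seg α m <+: seg α n := by
  induction n with
  | zero => simp_all [seg, Nat.le_zero.mp h]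
  | succ n ih =>
    rcases Nat.lt_succ_iff_lt_or_eq.mp (Nat.lt_succ_of_le h) with h' | rfl
    · exact (ih (Nat.lt_succ_iff.mp h')).trans
        (seg_snoc α n ▸ List.prefix_append _ _)
    · exact List.prefix_rfl

lemma seg_length (α : ℕ → ℕ) (n : ℕ) : (seg α n).length = n := by simp [seg]

lemma brouwer_mono {γ : List ℕ → ℕ} (h : IsBrouwerOp γ) :
    ∀ a b : List ℕ, γ a ≠ 0 → a <+: b → γ b = γ a := by
  induction h with
  | const n => intro a b _ _; rfl
  | sup h0 hn ih =>
    intro a b ha hab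
    cases a with
    | nil => exact absurd h0 ha
    | cons k a' =>
      obtain ⟨t, rfl⟩ := hab
      exact ih k a' (a' ++ t) ha ⟨t, rfl⟩

/-- The value of a realiser on the bar determines `F` on the basic open. -/
lemma bar_value {F : (ℕ → ℕ) → ℕ} {γ : List ℕ → ℕ} (hb : IsBrouwerOp γ)
    (hr : ∀ α : ℕ → ℕ, ∃ n, γ (seg α n) = F α + 1)
    {a : List ℕ} (ha : a ∈ barOf γ) {α : ℕ → ℕ} (hα : seg α a.length = a) :
    F α + 1 = γ a := by
  obtain ⟨n, hn⟩ := hr α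
  rcases le_total n a.length with h | h
  · have hpre : seg α n <+: a := hα ▸ seg_prefix α h
    by_cases he : seg α n = a
    · rw [← he, hn]
    · have := ha.2 (seg α n) hpre he
      omega
  · have hpre : a <+: seg α n := hα ▸ seg_prefix α h
    have := brouwer_mono hb a (seg α n) (by have := ha.1; omega) hpre
    rw [hn] at this
    exact this

/-- Prepend a value to a sequence. -/
def consSeq (n : ℕ) (α : ℕ → ℕ) : ℕ → ℕ := fun i => Nat.rec n (fun j _ => α j) i

lemma consSeq_zero (n : ℕ) (α : ℕ → ℕ) : consSeq n α 0 = n := rfl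

lemma consSeq_succ (n : ℕ) (α : ℕ → ℕ) (i : ℕ) : consSeq n α (i+1) = α i := rfl

lemma consSeq_eta (α : ℕ → ℕ) : consSeq (α 0) (fun i => α (i+1)) = α := by
  funext i; cases i <;> rfl

lemma back_dir {γ : List ℕ → ℕ} (h : IsBrouwerOp γ) :
    ∀ F : (ℕ → ℕ) → ℕ,
      (∀ a ∈ barOf γ, ∀ α β : ℕ → ℕ,
          seg α a.length = a → seg β a.length = a → F α = F β) →
      ∃ γ' : List ℕ → ℕ, IsBrouwerOp γ' ∧ ∀ α : ℕ → ℕ, ∃ n, γ' (seg α n) = F α + 1 := by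
  induction h with
  | const n =>
    intro F hF
    refine ⟨fun _ => F (fun _ => 0) + 1, IsBrouwerOp.const _, fun α => ⟨0, ?_⟩⟩
    have : F α = F (fun _ => 0) :=
      hF [] ⟨Nat.succ_pos n, fun b hb hne => absurd (List.prefix_nil.mp hb) hne⟩
        α (fun _ => 0) rfl rfl
    rw [this]
  | @sup γ h0 hn ih =>
    intro F hF
    have key : ∀ n : ℕ, ∃ γ' : List ℕ → ℕ, IsBrouwerOp γ' ∧
        ∀ α : ℕ → ℕ, ∃ k, γ' (seg α k) = F (consSeq n α) + 1 := by
      intro n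
      refine ih n (fun α => F (consSeq n α)) ?_
      intro b hb α β hα hβ
      have hbar : (n :: b) ∈ barOf γ := by
        refine ⟨hb.1, fun c hc hne => ?_⟩
        cases c with
        | nil => exact h0
        | cons m c' =>
          obtain ⟨t, ht⟩ := hc
          have hm : m = n := by injection ht with h1 _
          subst hm
          refine hb.2 c' ⟨t, by injection ht⟩ ?_
          intro he; exact hne (by rw [he])
      have hseg : ∀ δ : ℕ → ℕ, seg δ b.length = b →
          seg (consSeq n δ) (n :: b).length = n :: b := by
        intro δ hδ
        rw [List.length_cons, seg_succ, consSeq_zero]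
        congr 1
      exact hF (n :: b) hbar _ _ (hseg α hα) (hseg β hβ)
    choose γs hγs hreal using key
    refine ⟨fun a => match a with | [] => 0 | k :: a' => γs k a', ?_, ?_⟩
    · exact IsBrouwerOp.sup rfl (fun n => hγs n)
    · intro α
      obtain ⟨k, hk⟩ := hreal (α 0) (fun i => α (i+1))
      refine ⟨k + 1, ?_⟩
      rw [seg_succ]
      simp only []
      rw [hk, consSeq_eta]

theorem realisable_iff_constant_on_bar (F : (ℕ → ℕ) → ℕ) :
    (∃ γ : List ℕ → ℕ, IsBrouwerOp γ ∧ ∀ α : ℕ → ℕ, ∃ n, γ (seg α n) = F α + 1)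
      ↔ ∃ γ : List ℕ → ℕ, IsBrouwerOp γ ∧
          ∀ a ∈ barOf γ, ∀ α β : ℕ → ℕ,
            seg α a.length = a → seg β a.length = a → F α = F β := by
  constructor
  · rintro ⟨γ, hb, hr⟩
    refine ⟨γ, hb, fun a ha α β hα hβ => ?_⟩
    have h1 := bar_value (F := F) hb hr ha hα
    have h2 := bar_value (F := F) hb hr ha hβ
    omega
  · rintro ⟨γ, hb, hF⟩
    exact back_dir hb F hF
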